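/- Let (Y, ℬ(Y), P) be a probability space, a, a' : Y → (0, ∞) measurable with ∫ a dP = ∫ a' dP = 1, and b, c : Y → (0, ∞) bounded measurable with inf_{y∈Y} c(y) > 0, and suppose there exists y₀ ∈ Y with c(y₀) = inf_{y∈Y} c(y). Let γ, ε, δ > 0 be such that |a(y)/a'(y) − 1| ≤ γ, |c(y)/c(y₀) − 1| ≤ ε, and |b(y)/c(y) − 1| ≤ δ for all y ∈ Y. Then |(∫ a b dP) / (∫ a' c dP) − 1| ≤ δ + εγ + δεγ. -/

import Mathlib

open MeasureTheory

/-- Estimate (31): if `a, a'` are positive measurable with `∫ a dP = ∫ a' dP = 1`, `b, c`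
positive bounded measurable, `c` attains its positive infimum at some `y₀`, and
`|a/a' − 1| ≤ γ`, `|c/c(y₀) − 1| ≤ ε`, `|b/c − 1| ≤ δ` pointwise, then
`|(∫ ab dP)/(∫ a'c dP) − 1| ≤ δ + εγ + δεγ`. -/
theorem ratio_integral_bound_three_eps {Y : Type*} [MeasurableSpace Y]
    (P : Measure Y) [IsProbabilityMeasure P]
    (a a' b c : Y → ℝ)
    (ha : Measurable a) (ha' : Measurable a') (hb : Measurable b) (hc : Measurable c)
    (hapos : ∀ y, 0 < a y) (ha'pos : ∀ y, 0 < a' y)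
    (hbpos : ∀ y, 0 < b y) (hcpos : ∀ y, 0 < c y)
    (hai : Integrable a P) (ha'i : Integrable a' P)
    (ha1 : ∫ y, a y ∂P = 1) (ha'1 : ∫ y, a' y ∂P = 1)
    (hbbd : BddAbove (Set.range b)) (hcbd : BddAbove (Set.range c))
    (hcinf : 0 < ⨅ y, c y)
    (y₀ : Y) (hy₀ : c y₀ = ⨅ y, c y)
    (γ ε δ : ℝ) (hγ : 0 < γ) (hε : 0 < ε) (hδ : 0 < δ)
    (haa' : ∀ y, |a y / a' y - 1| ≤ γ)
    (hcc : ∀ y, |c y / c y₀ - 1| ≤ ε)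
    (hbc : ∀ y, |b y / c y - 1| ≤ δ) :
    |(∫ y, a y * b y ∂P) / (∫ y, a' y * c y ∂P) - 1| ≤ δ + ε * γ + δ * ε * γ := by
  set c₀ := c y₀ with hc₀def
  have hc₀pos : 0 < c₀ := hcpos y₀
  obtain ⟨B, hB⟩ := hbbd
  obtain ⟨C, hC⟩ := hcbd
  have hBb : ∀ y, ‖b y‖ ≤ B := fun y => by
    rw [Real.norm_eq_abs, abs_of_pos (hbpos y)]; exact hB ⟨y, rfl⟩
  have hCc : ∀ y, ‖c y‖ ≤ C := fun y => by
    rw [Real.norm_eq_abs, abs_of_pos (hcpos y)]; exact hC ⟨y, rfl⟩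
  -- integrability
  have hiab : Integrable (fun y => a y * b y) P := by
    have := hai.bdd_mul hb.aestronglyMeasurable (Filter.Eventually.of_forall hBb)
    exact this.congr (Filter.Eventually.of_forall fun y => mul_comm (b y) (a y))
  have hiac : Integrable (fun y => a y * c y) P := by
    have := hai.bdd_mul hc.aestronglyMeasurable (Filter.Eventually.of_forall hCc)
    exact this.congr (Filter.Eventually.of_forall fun y => mul_comm (c y) (a y))
  have hia'c : Integrable (fun y => a' y * c y) P := by
    have := ha'i.bdd_mul hc.aestronglyMeasurable (Filter.Eventually.of_forall hCc)
    exact this.congr (Filter.Eventually.of_forall fun y => mul_comm (c y) (a' y))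
  set I := ∫ y, a y * b y ∂P with hIdef
  set J := ∫ y, a' y * c y ∂P with hJdef
  set K := ∫ y, a y * c y ∂P with hKdef
  -- positivity of J
  have hJpos : 0 < J := by
    rw [hJdef]
    rw [integral_pos_iff_support_of_nonneg
      (fun y => le_of_lt (mul_pos (ha'pos y) (hcpos y))) hia'c]
    have : Function.support (fun y => a' y * c y) = Set.univ := by
      ext y
      simp only [Function.mem_support, Set.mem_univ, iff_true]
      exact (mul_pos (ha'pos y) (hcpos y)).ne'
    rw [this]; simp
  -- pointwise bounds
  have hbc' : ∀ y, |b y - c y| ≤ δ * c y := fun y => by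
    have h := hbc y
    rw [div_sub_one (hcpos y).ne', abs_div, abs_of_pos (hcpos y)] at h
    exact (div_le_iff₀ (hcpos y)).mp h
  have haa'' : ∀ y, |a y - a' y| ≤ γ * a' y := fun y => by
    have h := haa' y
    rw [div_sub_one (ha'pos y).ne', abs_div, abs_of_pos (ha'pos y)] at h
    exact (div_le_iff₀ (ha'pos y)).mp h
  have hc₀le : ∀ y, c₀ ≤ c y := fun y => by
    calc c₀ = ⨅ y, c y := hy₀
      _ ≤ c y := ciInf_le ⟨0, fun x ⟨y, hy⟩ => hy ▸ (hcpos y).le⟩ y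
  have hcc' : ∀ y, |c y - c₀| ≤ ε * c y := fun y => by
    have h := hcc y
    rw [div_sub_one hc₀pos.ne', abs_div, abs_of_pos hc₀pos] at h
    have := (div_le_iff₀ hc₀pos).mp h
    calc |c y - c₀| ≤ ε * c₀ := this
      _ ≤ ε * c y := by nlinarith [hc₀le y]
  -- bound on ∫ a (b - c)
  have hi1 : Integrable (fun y => a y * (b y - c y)) P := by
    have : (fun y => a y * (b y - c y)) = fun y => a y * b y - a y * c y := by
      funext y; ring
    rw [this]; exact hiab.sub hiac
  have hbound1 : |∫ y, a y * (b y - c y) ∂P| ≤ δ * K := by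
    calc |∫ y, a y * (b y - c y) ∂P| ≤ ∫ y, |a y * (b y - c y)| ∂P :=
          by
          have h := norm_integral_le_integral_norm (μ := P) (fun y => a y * (b y - c y))
          simpa only [Real.norm_eq_abs] using h
      _ ≤ ∫ y, δ * (a y * c y) ∂P := by
          apply integral_mono hi1.abs (hiac.const_mul δ)
          intro y
          dsimp only
          rw [abs_mul, abs_of_pos (hapos y)]
          calc a y * |b y - c y| ≤ a y * (δ * c y) :=
                mul_le_mul_of_nonneg_left (hbc' y) (hapos y).le
            _ = δ * (a y * c y) := by ring
      _ = δ * K := by rw [integral_const_mul]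
  -- bound on ∫ (a - a')(c - c₀)
  have hi2 : Integrable (fun y => (a y - a' y) * (c y - c₀)) P := by
    have : (fun y => (a y - a' y) * (c y - c₀)) =
        fun y => a y * c y - a' y * c y - c₀ * (a y - a' y) := by
      funext y; ring
    rw [this]; exact (hiac.sub hia'c).sub ((hai.sub ha'i).const_mul c₀)
  have hbound2 : |∫ y, (a y - a' y) * (c y - c₀) ∂P| ≤ γ * ε * J := by
    calc |∫ y, (a y - a' y) * (c y - c₀) ∂P|
        ≤ ∫ y, |(a y - a' y) * (c y - c₀)| ∂P := by
          have h := norm_integral_le_integral_norm (μ := P) (fun y => (a y - a' y) * (c y - c₀))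
          simpa only [Real.norm_eq_abs] using h
      _ ≤ ∫ y, γ * ε * (a' y * c y) ∂P := by
          apply integral_mono hi2.abs (hia'c.const_mul _)
          intro y
          dsimp only
          rw [abs_mul]
          calc |a y - a' y| * |c y - c₀| ≤ (γ * a' y) * (ε * c y) := by
                exact mul_le_mul (haa'' y) (hcc' y) (abs_nonneg _)
                  (mul_nonneg hγ.le (ha'pos y).le)
            _ = γ * ε * (a' y * c y) := by ring
      _ = γ * ε * J := by rw [integral_const_mul]
  -- K - J = ∫ (a - a')(c - c₀)
  have hKJ : K - J = ∫ y, (a y - a' y) * (c y - c₀) ∂P := by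
    have heq : (fun y => (a y - a' y) * (c y - c₀)) =
        fun y => (a y * c y - a' y * c y) - c₀ * (a y - a' y) := by
      funext y; ring
    have hi3 : Integrable (fun y => a y * c y - a' y * c y) P := hiac.sub hia'c
    have hi4 : Integrable (fun y => c₀ * (a y - a' y)) P := (hai.sub ha'i).const_mul c₀
    have e1 : ∫ y, (a y * c y - a' y * c y) - c₀ * (a y - a' y) ∂P
        = (∫ y, a y * c y - a' y * c y ∂P) - ∫ y, c₀ * (a y - a' y) ∂P :=
      integral_sub hi3 hi4
    have e2 : ∫ y, a y * c y - a' y * c y ∂P = K - J := integral_sub hiac hia'c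
    have e3 : ∫ y, c₀ * (a y - a' y) ∂P = c₀ * ∫ y, a y - a' y ∂P :=
      integral_const_mul c₀ _
    have e4 : ∫ y, a y - a' y ∂P = (∫ y, a y ∂P) - ∫ y, a' y ∂P :=
      integral_sub hai ha'i
    rw [heq, e1, e2, e3, e4, ha1, ha'1]
    ring
  have hKle : K ≤ J + γ * ε * J := by
    have := (abs_le.mp (hKJ ▸ hbound2)).2
    linarith
  have hKnonneg : 0 ≤ K := by
    rw [hKdef]
    exact integral_nonneg fun y => (mul_pos (hapos y) (hcpos y)).le
  -- I - J decomposition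
  have hIJ : I - J = (∫ y, a y * (b y - c y) ∂P) + ∫ y, (a y - a' y) * (c y - c₀) ∂P := by
    rw [← hKJ]
    have : ∫ y, a y * (b y - c y) ∂P = I - K := by
      have heq : (fun y => a y * (b y - c y)) = fun y => a y * b y - a y * c y := by
        funext y; ring
      rw [heq, integral_sub hiab hiac]
    rw [this]; ring
  have hmain : |I - J| ≤ (δ + ε * γ + δ * ε * γ) * J := by
    calc |I - J| ≤ δ * K + γ * ε * J := by
          rw [hIJ]; exact (abs_add_le _ _).trans (add_le_add hbound1 hbound2)
      _ ≤ δ * (J + γ * ε * J) + γ * ε * J := by nlinarith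
      _ = (δ + ε * γ + δ * ε * γ) * J := by ring
  rw [div_sub_one hJpos.ne', abs_div, abs_of_pos hJpos, div_le_iff₀ hJpos]
  exact hmain
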